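/- Let p be a prime different from 2 and 5 and let e be a positive integer. Then the images of 1 + √5 and 1 − √5 in the quotient ring ℤ[√5]/(p^e) are units, and l(p^e) equals the multiplicative order of the image of (1 + √5)·(1 − √5)^{−1} in the unit group (ℤ[√5]/(p^e))^×. -/

import Mathlib

/-- The rank of apparition `l(m)`: the least positive integer `k` such that
`F_k ≡ 0 (mod m)`. -/
noncomputable def rank (m : ℕ) : ℕ :=
  sInf {k : ℕ | 0 < k ∧ m ∣ Nat.fib k}

private lemma sqrt5_sq : (Zsqrtd.sqrtd : Zsqrtd 5) * Zsqrtd.sqrtd = 5 := by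
  simpa using Zsqrtd.dmuld (d := 5)

open Zsqrtd in
private lemma pow_sub_pow_eq (k : ℕ) :
    (1 + sqrtd : Zsqrtd 5) ^ k - (1 - sqrtd) ^ k
      = 2 ^ k * (Nat.fib k : Zsqrtd 5) * sqrtd := by
  induction k using Nat.twoStepInduction with
  | zero => simp
  | one => simp; ring
  | more n ih1 ih2 =>
    rw [Nat.fib_add_two]
    push_cast
    linear_combination (2 : Zsqrtd 5) * ih2 + 4 * ih1 +
      ((1 + sqrtd : Zsqrtd 5) ^ n - (1 - sqrtd) ^ n) * sqrt5_sq

private lemma dvd_emod_sub (a q : ℤ) : q ∣ (a % q) - a :=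
  ⟨-(a / q), by linear_combination Int.mul_ediv_add_emod a q⟩

/-- for a prime `p ≠ 2, 5` and `e ≥ 1`, the images of `1 + √5` and
`1 - √5` in `ℤ[√5]/(p^e)` are units, and `l(p^e)` is the multiplicative order of
the image of `(1 + √5)·(1 - √5)⁻¹` in the unit group `(ℤ[√5]/(p^e))ˣ`. -/
theorem rank_eq_orderOf (p : ℕ) (hp : p.Prime) (hp2 : p ≠ 2) (hp5 : p ≠ 5)
    (e : ℕ) (he : 0 < e) :
    ∃ u v : (Zsqrtd 5 ⧸ Ideal.span {((p : Zsqrtd 5)) ^ e})ˣ,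
      (u : Zsqrtd 5 ⧸ Ideal.span {((p : Zsqrtd 5)) ^ e}) =
          Ideal.Quotient.mk _ (1 + Zsqrtd.sqrtd) ∧
        (v : Zsqrtd 5 ⧸ Ideal.span {((p : Zsqrtd 5)) ^ e}) =
          Ideal.Quotient.mk _ (1 - Zsqrtd.sqrtd) ∧
        rank (p ^ e) = orderOf (u * v⁻¹) := by
  set R := Zsqrtd 5
  set s : R := Zsqrtd.sqrtd
  set q : ℕ := p ^ e with hqdef
  set I : Ideal R := Ideal.span {((p : R)) ^ e} with hIdef
  have hq0 : 0 < q := pow_pos hp.pos e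
  have hgen : ((p : R)) ^ e = (((q : ℤ)) : R) := by rw [hqdef, Nat.cast_pow, Int.cast_pow, Int.cast_natCast]
  have hmkq : Ideal.Quotient.mk I (((q : ℤ)) : R) = 0 := by
    rw [← hgen]
    exact Ideal.Quotient.eq_zero_iff_mem.mpr (Ideal.mem_span_singleton_self _)
  -- units from coprimality
  have key : ∀ n : ℤ, IsCoprime n (q : ℤ) → IsUnit (Ideal.Quotient.mk I ((n : ℤ) : R)) := by
    intro n hn
    obtain ⟨a, b, hab⟩ := hn
    refine IsUnit.of_mul_eq_one (Ideal.Quotient.mk I ((a : ℤ) : R)) ?_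
    have h2 : ((a * n + b * q : ℤ) : R) = ((1 : ℤ) : R) := by rw [hab]
    rw [Int.cast_add, Int.cast_mul, Int.cast_mul, Int.cast_one] at h2
    have h3 : ((n : ℤ) : R) * ((a : ℤ) : R) = 1 - ((b : ℤ) : R) * (((q : ℤ)) : R) := by
      linear_combination h2
    rw [← map_mul, h3, map_sub, map_mul, hmkq, mul_zero, sub_zero, map_one]
  -- the basic coprimalities
  have cop2 : IsCoprime (2 : ℤ) ((q : ℕ) : ℤ) := by
    have h : Nat.Coprime 2 q :=
      Nat.Coprime.pow_right e ((Nat.coprime_primes Nat.prime_two hp).mpr (Ne.symm hp2))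
    exact_mod_cast Nat.isCoprime_iff_coprime.mpr h
  have cop5 : IsCoprime (5 : ℤ) ((q : ℕ) : ℤ) := by
    have h : Nat.Coprime 5 q :=
      Nat.Coprime.pow_right e ((Nat.coprime_primes (by norm_num) hp).mpr (Ne.symm hp5))
    exact_mod_cast Nat.isCoprime_iff_coprime.mpr h
  have cop4 : IsCoprime (-4 : ℤ) ((q : ℕ) : ℤ) := by
    have h : IsCoprime ((2:ℤ)^2) ((q : ℕ) : ℤ) := cop2.pow_left
    norm_num at h
    exact h.neg_left
  -- units u and v
  have hsq : s * s = 5 := sqrt5_sq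
  have hval : (1 + s) * (1 - s) = ((-4 : ℤ) : R) := by
    push_cast
    linear_combination (-1 : R) * hsq
  have huv : IsUnit (Ideal.Quotient.mk I (1 + s) * Ideal.Quotient.mk I (1 - s)) := by
    rw [← map_mul, hval]; exact key (-4) cop4
  have hu : IsUnit (Ideal.Quotient.mk I (1 + s)) := isUnit_of_mul_isUnit_left huv
  have hv : IsUnit (Ideal.Quotient.mk I (1 - s)) := isUnit_of_mul_isUnit_right huv
  refine ⟨hu.unit, hv.unit, hu.unit_spec, hv.unit_spec, ?_⟩
  set x := hu.unit * hv.unit⁻¹ with hx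
  -- finiteness of the quotient ring
  haveI hfin : Finite (R ⧸ I) := by
    refine Finite.of_surjective
      (fun ab : Fin q × Fin q => Ideal.Quotient.mk I ⟨(ab.1 : ℤ), (ab.2 : ℤ)⟩) ?_
    intro z
    obtain ⟨w, rfl⟩ := Ideal.Quotient.mk_surjective z
    have hqz : ((q : ℕ) : ℤ) ≠ 0 := by exact_mod_cast hq0.ne'
    have hqpos : (0 : ℤ) < (q : ℕ) := by exact_mod_cast hq0
    have h1 := Int.emod_nonneg w.re hqz
    have h2 := Int.emod_lt_of_pos w.re hqpos
    have h3 := Int.emod_nonneg w.im hqz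
    have h4 := Int.emod_lt_of_pos w.im hqpos
    refine ⟨(⟨(w.re % q).toNat, by omega⟩, ⟨(w.im % q).toNat, by omega⟩), ?_⟩
    rw [Ideal.Quotient.eq, hIdef, Ideal.mem_span_singleton, hgen, Zsqrtd.intCast_dvd]
    constructor
    · rw [Zsqrtd.re_sub]; simpa [Int.toNat_of_nonneg h1] using dvd_emod_sub w.re (q : ℤ)
    · rw [Zsqrtd.im_sub]; simpa [Int.toNat_of_nonneg h3] using dvd_emod_sub w.im (q : ℤ)
  -- characterization of x^k = 1
  have hiff : ∀ k : ℕ, (x ^ k = 1 ↔ q ∣ Nat.fib k) := by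
    intro k
    have c2R : IsCoprime (((q : ℤ)) : R) (((2 : ℤ)) : R) :=
      (cop2.symm).map (Int.castRingHom R)
    have c5R : IsCoprime (((q : ℤ)) : R) (((5 : ℤ)) : R) :=
      (cop5.symm).map (Int.castRingHom R)
    have c5R' : IsCoprime (((q : ℤ)) : R) (s * s) := by
      rwa [show (((5 : ℤ)) : R) = s * s by push_cast; linear_combination -hsq] at c5R
    have cs : IsCoprime (((q : ℤ)) : R) s := IsCoprime.of_mul_right_left c5R'
    have c2R' : IsCoprime (((q : ℤ)) : R) ((2 : R) ^ k) := by
      have := c2R.pow_right (n := k)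
      push_cast at this ⊢
      exact this
    have copR : IsCoprime (((q : ℤ)) : R) ((2 : R) ^ k * s) := c2R'.mul_right cs
    have h1 : x ^ k = 1 ↔ hu.unit ^ k = hv.unit ^ k := by
      rw [hx, mul_pow, inv_pow, mul_inv_eq_one]
    rw [h1, Units.ext_iff, Units.val_pow_eq_pow_val, Units.val_pow_eq_pow_val,
      hu.unit_spec, hv.unit_spec, ← map_pow, ← map_pow, Ideal.Quotient.eq, hIdef,
      Ideal.mem_span_singleton, hgen, pow_sub_pow_eq k]
    constructor
    · intro h
      have h' : (((q : ℤ)) : R) ∣ ((2 : R) ^ k * s) * ((Nat.fib k : ℤ) : R) := by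
        convert h using 1; push_cast; ring
      have h'' := copR.dvd_of_dvd_mul_left h'
      rw [Zsqrtd.intCast_dvd_intCast] at h''
      exact_mod_cast h''
    · intro h
      have h' : (((q : ℤ)) : R) ∣ ((Nat.fib k : ℤ) : R) :=
        (Zsqrtd.intCast_dvd_intCast _ _).mpr (Int.natCast_dvd_natCast.mpr h)
      have h'' : (((q : ℤ)) : R) ∣ (2 : R) ^ k * ((Nat.fib k : ℤ) : R) * s :=
        ((h'.mul_left _).mul_right _)
      push_cast at h'' ⊢
      convert h'' using 2
  -- conclusion
  have hpos : 0 < orderOf x := orderOf_pos x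
  have hset : {k : ℕ | 0 < k ∧ q ∣ Nat.fib k} = {k : ℕ | 0 < k ∧ orderOf x ∣ k} := by
    ext k
    simp only [Set.mem_setOf_eq, ← hiff k, orderOf_dvd_iff_pow_eq_one]
  show sInf {k : ℕ | 0 < k ∧ q ∣ Nat.fib k} = orderOf x
  rw [hset]
  apply le_antisymm
  · exact Nat.sInf_le ⟨hpos, dvd_refl _⟩
  · obtain ⟨h1, h2⟩ := Nat.sInf_mem (⟨orderOf x, hpos, dvd_refl _⟩ :
      {k : ℕ | 0 < k ∧ orderOf x ∣ k}.Nonempty)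
    exact Nat.le_of_dvd h1 h2
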